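/- arXiv:1501.06391 — 8 statements merged into one kernel-verified Lean document; each statement's English description precedes it below -/
import Mathlib

section
/- Let α_1, …, α_d be positive natural numbers with n = α_1 + ⋯ + α_d. Then for every p ∈ [1,∞) and every bounded real sequence x, ‖x‖_{∞,p,n}^p ≤ ∑_{l=1}^{d} (α_l / n) ‖x‖_{∞,p,α_l}^p. -/
open Finset

noncomputable def discNorm (x : ℕ → ℝ) (p : ℝ) (n : ℕ) : ℝ :=
  ⨆ j : ℕ, ((1 / (n : ℝ)) * ∑ i ∈ Finset.range n, |x (j + i)| ^ p) ^ (1 / p)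

lemma discNorm_nonneg (x : ℕ → ℝ) (p : ℝ) (n : ℕ) : 0 ≤ discNorm x p n :=
  Real.iSup_nonneg fun j => Real.rpow_nonneg
    (mul_nonneg (by positivity) (Finset.sum_nonneg fun i _ =>
      Real.rpow_nonneg (abs_nonneg _) p)) _

lemma block_bound (x : ℕ → ℝ) (C : ℝ) (hC : ∀ i, |x i| ≤ C) (p : ℝ) (hp : 1 ≤ p)
    (m : ℕ) (hm : 1 ≤ m) (j : ℕ) :
    ∑ i ∈ Finset.range m, |x (j + i)| ^ p ≤ (m : ℝ) * discNorm x p m ^ p := by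
  have hp0 : 0 < p := lt_of_lt_of_le one_pos hp
  have hC0 : 0 ≤ C := le_trans (abs_nonneg _) (hC 0)
  have hm0 : (0 : ℝ) < m := by exact_mod_cast hm
  set g : ℕ → ℝ := fun k => ((1 / (m : ℝ)) * ∑ i ∈ Finset.range m, |x (k + i)| ^ p) ^ (1 / p)
    with hg
  have hinner : ∀ k, 0 ≤ (1 / (m : ℝ)) * ∑ i ∈ Finset.range m, |x (k + i)| ^ p := by
    intro k
    exact mul_nonneg (by positivity) (Finset.sum_nonneg fun i _ =>
      Real.rpow_nonneg (abs_nonneg _) p)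
  have hbdd : BddAbove (Set.range g) := by
    refine ⟨(C ^ p) ^ (1 / p), ?_⟩
    rintro _ ⟨k, rfl⟩
    refine Real.rpow_le_rpow (hinner k) ?_ (by positivity)
    have hsum : ∑ i ∈ Finset.range m, |x (k + i)| ^ p ≤ (m : ℝ) * C ^ p := by
      calc ∑ i ∈ Finset.range m, |x (k + i)| ^ p
          ≤ ∑ i ∈ Finset.range m, C ^ p :=
            Finset.sum_le_sum fun i _ =>
              Real.rpow_le_rpow (abs_nonneg _) (hC _) hp0.le
        _ = (m : ℝ) * C ^ p := by simp [mul_comm]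
    calc (1 / (m : ℝ)) * ∑ i ∈ Finset.range m, |x (k + i)| ^ p
        ≤ (1 / (m : ℝ)) * ((m : ℝ) * C ^ p) :=
          mul_le_mul_of_nonneg_left hsum (by positivity)
      _ = C ^ p := by field_simp
  have hle : g j ≤ discNorm x p m := le_ciSup hbdd j
  have hraise : (g j) ^ p ≤ discNorm x p m ^ p :=
    Real.rpow_le_rpow (Real.rpow_nonneg (hinner j) _) hle hp0.le
  have hgj : (g j) ^ p = (1 / (m : ℝ)) * ∑ i ∈ Finset.range m, |x (j + i)| ^ p := by
    show ((_ : ℝ) ^ (1 / p)) ^ p = _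
    rw [← Real.rpow_mul (hinner j), one_div_mul_cancel hp0.ne', Real.rpow_one]
  rw [hgj] at hraise
  calc ∑ i ∈ Finset.range m, |x (j + i)| ^ p
      = (m : ℝ) * ((1 / (m : ℝ)) * ∑ i ∈ Finset.range m, |x (j + i)| ^ p) := by
        field_simp
    _ ≤ (m : ℝ) * discNorm x p m ^ p := mul_le_mul_of_nonneg_left hraise hm0.le

lemma key_bound (x : ℕ → ℝ) (C : ℝ) (hC : ∀ i, |x i| ≤ C) (p : ℝ) (hp : 1 ≤ p) :
    ∀ (d : ℕ) (α : Fin d → ℕ), (∀ l, 1 ≤ α l) → ∀ j : ℕ,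
      ∑ i ∈ Finset.range (∑ l, α l), |x (j + i)| ^ p
        ≤ ∑ l, (α l : ℝ) * discNorm x p (α l) ^ p := by
  intro d
  induction d with
  | zero => intro α hα j; simp
  | succ d ih =>
    intro α hα j
    rw [Fin.sum_univ_succ, Finset.sum_range_add, Fin.sum_univ_succ]
    have h1 := block_bound x C hC p hp (α 0) (hα 0) j
    have h2 := ih (fun l => α l.succ) (fun l => hα l.succ) (j + α 0)
    have h2' : ∑ i ∈ Finset.range (∑ l, α (Fin.succ l)), |x (j + (α 0 + i))| ^ p
        ≤ ∑ l : Fin d, (α (Fin.succ l) : ℝ) * discNorm x p (α (Fin.succ l)) ^ p := by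
      convert h2 using 3 with i
      ring_nf
    exact add_le_add h1 h2'

theorem stmt2 (d : ℕ) (hd : 1 ≤ d) (α : Fin d → ℕ) (hα : ∀ l, 1 ≤ α l)
    (n : ℕ) (hn : n = ∑ l, α l) (p : ℝ) (hp : 1 ≤ p)
    (x : ℕ → ℝ) (hx : ∃ C, ∀ i, |x i| ≤ C) :
    discNorm x p n ^ p ≤ ∑ l, ((α l : ℝ) / (n : ℝ)) * discNorm x p (α l) ^ p := by
  obtain ⟨C, hC⟩ := hx
  have hp0 : 0 < p := lt_of_lt_of_le one_pos hp
  have hn1 : 1 ≤ n := by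
    rw [hn]
    calc 1 ≤ α ⟨0, hd⟩ := hα _
      _ ≤ ∑ l, α l := Finset.single_le_sum (fun l _ => Nat.zero_le _) (Finset.mem_univ _)
  have hn0 : (0 : ℝ) < n := by exact_mod_cast hn1
  set B : ℝ := ∑ l, ((α l : ℝ) / (n : ℝ)) * discNorm x p (α l) ^ p with hB
  have hB0 : 0 ≤ B :=
    Finset.sum_nonneg fun l _ => mul_nonneg (by positivity)
      (Real.rpow_nonneg (discNorm_nonneg x p (α l)) p)
  have hsup : discNorm x p n ≤ B ^ (1 / p) := by
    refine ciSup_le fun j => ?_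
    have hinner : 0 ≤ (1 / (n : ℝ)) * ∑ i ∈ Finset.range n, |x (j + i)| ^ p :=
      mul_nonneg (by positivity) (Finset.sum_nonneg fun i _ =>
        Real.rpow_nonneg (abs_nonneg _) p)
    refine Real.rpow_le_rpow hinner ?_ (by positivity)
    have hkey : ∑ i ∈ Finset.range n, |x (j + i)| ^ p
        ≤ ∑ l, (α l : ℝ) * discNorm x p (α l) ^ p := by
      rw [hn]; exact key_bound x C hC p hp d α hα j
    calc (1 / (n : ℝ)) * ∑ i ∈ Finset.range n, |x (j + i)| ^ p
        ≤ (1 / (n : ℝ)) * ∑ l, (α l : ℝ) * discNorm x p (α l) ^ p :=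
          mul_le_mul_of_nonneg_left hkey (by positivity)
      _ = B := by rw [hB, Finset.mul_sum]; exact Finset.sum_congr rfl fun l _ => by ring
  have h1 : discNorm x p n ^ p ≤ (B ^ (1 / p)) ^ p :=
    Real.rpow_le_rpow (discNorm_nonneg x p n) hsup hp0.le
  rwa [← Real.rpow_mul hB0, one_div_mul_cancel hp0.ne', Real.rpow_one] at h1
end

section
/- If m = d·n for some natural numbers d, n ≥ 1, then for every p ∈ [1,∞) and every bounded real sequence x, ‖x‖_{∞,p,m} ≤ ‖x‖_{∞,p,n}. -/
open Finset

private lemma sum_range_mul' (f : ℕ → ℝ) (d n : ℕ) :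
    ∑ i ∈ Finset.range (d * n), f i
      = ∑ t ∈ Finset.range d, ∑ i ∈ Finset.range n, f (t * n + i) := by
  induction d with
  | zero => simp
  | succ d ih =>
      rw [Nat.succ_mul, Finset.sum_range_add, ih, Finset.sum_range_succ]

theorem stmt3 (d n m : ℕ) (hd : 1 ≤ d) (hn : 1 ≤ n) (hm : m = d * n)
    (p : ℝ) (hp : 1 ≤ p) (x : ℕ → ℝ) (hx : ∃ C, ∀ i, |x i| ≤ C) :
    discNorm x p m ≤ discNorm x p n := by
  obtain ⟨C, hC⟩ := hx
  have hp0 : 0 < p := lt_of_lt_of_le one_pos hp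
  have hpne : p ≠ 0 := ne_of_gt hp0
  have hn0 : (0:ℝ) < n := by exact_mod_cast hn
  have hd0 : (0:ℝ) < d := by exact_mod_cast hd
  set a : ℕ → ℝ := fun j => (1 / (n : ℝ)) * ∑ i ∈ Finset.range n, |x (j + i)| ^ p with ha
  have ha_nonneg : ∀ j, 0 ≤ a j := fun j =>
    mul_nonneg (by positivity) (Finset.sum_nonneg fun i _ =>
      Real.rpow_nonneg (abs_nonneg _) _)
  -- boundedness of the n-block norms
  have hbdd : BddAbove (Set.range fun j => a j ^ (1 / p)) := by
    refine ⟨(C ^ p) ^ (1 / p), ?_⟩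
    rintro _ ⟨j, rfl⟩
    apply Real.rpow_le_rpow (ha_nonneg j) _ (by positivity)
    have hsum : ∑ i ∈ Finset.range n, |x (j + i)| ^ p ≤ n * C ^ p := by
      calc ∑ i ∈ Finset.range n, |x (j + i)| ^ p
          ≤ ∑ _i ∈ Finset.range n, C ^ p :=
            Finset.sum_le_sum fun i _ =>
              Real.rpow_le_rpow (abs_nonneg _) (hC _) (le_of_lt hp0)
        _ = n * C ^ p := by simp
    rw [ha]
    calc (1 / (n:ℝ)) * ∑ i ∈ Finset.range n, |x (j + i)| ^ p
        ≤ (1 / (n:ℝ)) * (n * C ^ p) := by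
          exact mul_le_mul_of_nonneg_left hsum (by positivity)
      _ = C ^ p := by field_simp
  set D := discNorm x p n with hD
  have hle : ∀ j, a j ^ (1 / p) ≤ D := fun j => le_ciSup hbdd j
  have hD0 : 0 ≤ D := le_trans (Real.rpow_nonneg (ha_nonneg 0) _) (hle 0)
  have haD : ∀ j, a j ≤ D ^ p := by
    intro j
    have := Real.rpow_le_rpow (Real.rpow_nonneg (ha_nonneg j) _) (hle j) (le_of_lt hp0)
    rw [← Real.rpow_mul (ha_nonneg j), one_div_mul_cancel hpne, Real.rpow_one] at this
    exact this
  apply ciSup_le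
  intro j
  have key : (1 / (m : ℝ)) * ∑ i ∈ Finset.range m, |x (j + i)| ^ p ≤ D ^ p := by
    subst hm
    have hsplit : ∑ i ∈ Finset.range (d * n), |x (j + i)| ^ p
        = ∑ t ∈ Finset.range d, ∑ i ∈ Finset.range n, |x ((j + t * n) + i)| ^ p := by
      rw [sum_range_mul' (fun i => |x (j + i)| ^ p) d n]
      exact Finset.sum_congr rfl fun t _ => Finset.sum_congr rfl fun i _ => by
        rw [add_assoc]
    have hsum2 : ∑ t ∈ Finset.range d, ∑ i ∈ Finset.range n, |x ((j + t * n) + i)| ^ p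
        ≤ d * (n * D ^ p) := by
      calc ∑ t ∈ Finset.range d, ∑ i ∈ Finset.range n, |x ((j + t * n) + i)| ^ p
          ≤ ∑ _t ∈ Finset.range d, (n * D ^ p) := by
            apply Finset.sum_le_sum
            intro t _
            have := haD (j + t * n)
            rw [ha] at this
            have h2 : ∑ i ∈ Finset.range n, |x ((j + t * n) + i)| ^ p
                = n * ((1 / (n:ℝ)) * ∑ i ∈ Finset.range n, |x ((j + t * n) + i)| ^ p) := by
              field_simp
            rw [h2]
            exact mul_le_mul_of_nonneg_left this (le_of_lt hn0)
        _ = d * (n * D ^ p) := by simp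
    rw [hsplit]
    have hmn : ((d * n : ℕ) : ℝ) = (d : ℝ) * n := by push_cast; ring
    calc (1 / ((d * n : ℕ) : ℝ)) * ∑ t ∈ Finset.range d, ∑ i ∈ Finset.range n, |x ((j + t * n) + i)| ^ p
        ≤ (1 / ((d * n : ℕ) : ℝ)) * (d * (n * D ^ p)) := by
          apply mul_le_mul_of_nonneg_left hsum2
          rw [hmn]; positivity
      _ = D ^ p := by rw [hmn]; field_simp
  calc ((1 / (m : ℝ)) * ∑ i ∈ Finset.range m, |x (j + i)| ^ p) ^ (1 / p)
      ≤ (D ^ p) ^ (1 / p) := by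
        apply Real.rpow_le_rpow _ key (by positivity)
        exact mul_nonneg (by positivity) (Finset.sum_nonneg fun i _ =>
          Real.rpow_nonneg (abs_nonneg _) _)
    _ = D := by
        rw [← Real.rpow_mul hD0, mul_one_div_cancel hpne, Real.rpow_one]
end

section
/- Let n, m ∈ ℕ with 1 ≤ n ≤ m and suppose n does not divide m. Then for every p ∈ [1,∞) there exist bounded real sequences x and y such that ‖x‖_{∞,p,n} < ‖x‖_{∞,p,m} and ‖y‖_{∞,p,m} < ‖y‖_{∞,p,n}. -/
open Finset

lemma sum_ind (p : ℝ) (hp : p ≠ 0) (P : ℕ → Prop) [DecidablePred P] (j k : ℕ) :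
    ∑ i ∈ range k, |if P (j + i) then (1:ℝ) else 0| ^ p
      = ((range k).filter (fun i => P (j + i))).card := by
  rw [Finset.card_filter]
  push_cast
  refine Finset.sum_congr rfl fun i _ => ?_
  split <;> simp [Real.zero_rpow hp]

theorem stmt4 (n m : ℕ) (hn : 1 ≤ n) (hnm : n ≤ m) (hdvd : ¬ n ∣ m)
    (p : ℝ) (hp : 1 ≤ p) :
    ∃ x y : ℕ → ℝ, (∃ C, ∀ i, |x i| ≤ C) ∧ (∃ C, ∀ i, |y i| ≤ C) ∧
      discNorm x p n < discNorm x p m ∧ discNorm y p m < discNorm y p n := by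
  have hp0 : (0:ℝ) < p := lt_of_lt_of_le one_pos hp
  have hpne : p ≠ 0 := ne_of_gt hp0
  have hip : (0:ℝ) < 1 / p := by positivity
  have hn0 : 0 < n := hn
  have hm0 : 0 < m := lt_of_lt_of_le hn0 hnm
  have hnR : (0:ℝ) < n := by exact_mod_cast hn0
  have hmR : (0:ℝ) < m := by exact_mod_cast hm0
  have hr : m % n ≠ 0 := fun h => hdvd (Nat.dvd_of_mod_eq_zero h)
  have hnm' : n < m := lt_of_le_of_ne hnm (fun h => hdvd (h ▸ dvd_refl n))
  set q := m / n with hq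
  have hqm : n * q + m % n = m := Nat.div_add_mod m n
  have hmodlt : m % n < n := Nat.mod_lt m hn0
  refine ⟨(fun i => if n ∣ i then 1 else 0), (fun i => if i < n then 1 else 0),
    ⟨1, fun i => by dsimp only; split <;> simp⟩,
    ⟨1, fun i => by dsimp only; split <;> simp⟩, ?_, ?_⟩
  · -- x part
    have hx1 : discNorm (fun i => if n ∣ i then 1 else 0) p n ≤ ((1:ℝ)/n) ^ ((1:ℝ)/p) := by
      apply ciSup_le
      intro j
      have hs : ∑ i ∈ range n, |(fun i => if n ∣ i then (1:ℝ) else 0) (j + i)| ^ p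
          = (((range n).filter (fun i => n ∣ j + i)).card : ℝ) :=
        sum_ind p hpne (fun t => n ∣ t) j n
      rw [hs]
      have hcard : (((range n).filter (fun i => n ∣ j + i)).card : ℝ) ≤ 1 := by
        have h1 : ((range n).filter (fun i => n ∣ j + i)).card ≤ 1 := by
          apply Finset.card_le_one.2
          intro a ha b hb
          simp only [Finset.mem_filter, Finset.mem_range] at ha hb
          rcases le_total a b with h | h
          · have hd := Nat.dvd_sub hb.2 ha.2
            have he : (j + b) - (j + a) = b - a := by omega
            rw [he] at hd
            have := Nat.eq_zero_of_dvd_of_lt hd (by omega)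
            omega
          · have hd := Nat.dvd_sub ha.2 hb.2
            have he : (j + a) - (j + b) = a - b := by omega
            rw [he] at hd
            have := Nat.eq_zero_of_dvd_of_lt hd (by omega)
            omega
        exact_mod_cast h1
      apply Real.rpow_le_rpow (by positivity) _ (by positivity)
      have h := mul_le_mul_of_nonneg_left hcard (by positivity : (0:ℝ) ≤ 1 / (n:ℝ))
      linarith
    have hx2 : ((q+1:ℝ)/m) ^ ((1:ℝ)/p) ≤ discNorm (fun i => if n ∣ i then 1 else 0) p m := by
      have hbdd : BddAbove (Set.range (fun j =>
          ((1 / (m : ℝ)) * ∑ i ∈ Finset.range m,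
            |(fun i => if n ∣ i then (1:ℝ) else 0) (j + i)| ^ p) ^ ((1:ℝ)/p))) := by
        refine ⟨1, ?_⟩
        rintro _ ⟨j, rfl⟩
        dsimp only
        have hs : ∑ i ∈ range m, |if n ∣ (j + i) then (1:ℝ) else 0| ^ p
            = (((range m).filter (fun i => n ∣ j + i)).card : ℝ) :=
          sum_ind p hpne (fun t => n ∣ t) j m
        rw [hs]
        have hc : (((range m).filter (fun i => n ∣ j + i)).card : ℝ) ≤ m := by
          exact_mod_cast le_trans (Finset.card_filter_le _ _) (by simp)
        calc ((1 / (m:ℝ)) * ((range m).filter (fun i => n ∣ j + i)).card) ^ ((1:ℝ)/p)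
            ≤ ((1 / (m:ℝ)) * m) ^ ((1:ℝ)/p) := by
              apply Real.rpow_le_rpow (by positivity)
              · exact mul_le_mul_of_nonneg_left hc (by positivity)
              · positivity
          _ = 1 := by rw [one_div_mul_cancel (ne_of_gt hmR), Real.one_rpow]
      have h0 : ((q+1:ℝ)/m) ^ ((1:ℝ)/p) ≤
          ((1 / (m : ℝ)) * ∑ i ∈ Finset.range m,
            |(fun i => if n ∣ i then (1:ℝ) else 0) (0 + i)| ^ p) ^ ((1:ℝ)/p) := by
        dsimp only
        have hs : ∑ i ∈ range m, |if n ∣ (0 + i) then (1:ℝ) else 0| ^ p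
            = (((range m).filter (fun i => n ∣ 0 + i)).card : ℝ) :=
          sum_ind p hpne (fun t => n ∣ t) 0 m
        rw [hs]
        apply Real.rpow_le_rpow (by positivity) _ (by positivity)
        have hcard : (q + 1 : ℝ) ≤ (((range m).filter (fun i => n ∣ 0 + i)).card : ℝ) := by
          have himg : ((range (q+1)).image (fun t => n * t)) ⊆
              (range m).filter (fun i => n ∣ 0 + i) := by
            intro i hi
            simp only [Finset.mem_image, Finset.mem_range] at hi
            obtain ⟨t, ht, rfl⟩ := hi
            simp only [Finset.mem_filter, Finset.mem_range, zero_add]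
            refine ⟨?_, Dvd.intro t rfl⟩
            have h1 : n * t ≤ n * q := Nat.mul_le_mul_left n (by omega)
            omega
          have hcardimg : ((range (q+1)).image (fun t => n * t)).card = q + 1 := by
            rw [Finset.card_image_of_injective _ (mul_right_injective₀ (by omega))]
            simp
          have := Finset.card_le_card himg
          rw [hcardimg] at this
          exact_mod_cast this
        have h := mul_le_mul_of_nonneg_left hcard (by positivity : (0:ℝ) ≤ 1 / (m:ℝ))
        have e : ((q:ℝ)+1)/m = 1/(m:ℝ) * ((q:ℝ)+1) := by ring
        linarith
      exact le_trans h0 (le_ciSup hbdd 0)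
    refine lt_of_le_of_lt hx1 (lt_of_lt_of_le ?_ hx2)
    apply Real.rpow_lt_rpow (by positivity) _ hip
    rw [div_lt_div_iff₀ hnR hmR]
    have hlt : m < (q + 1) * n := by
      have : (q + 1) * n = n * q + n := by ring
      omega
    have hltR : (m:ℝ) < ((q:ℝ) + 1) * n := by exact_mod_cast hlt
    linarith
  · -- y part
    have hy1 : discNorm (fun i => if i < n then 1 else 0) p m ≤ ((n:ℝ)/m) ^ ((1:ℝ)/p) := by
      apply ciSup_le
      intro j
      have hs : ∑ i ∈ range m, |(fun i => if i < n then (1:ℝ) else 0) (j + i)| ^ p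
          = (((range m).filter (fun i => j + i < n)).card : ℝ) :=
        sum_ind p hpne (fun t => t < n) j m
      rw [hs]
      apply Real.rpow_le_rpow (by positivity) _ (by positivity)
      have hcard : (((range m).filter (fun i => j + i < n)).card : ℝ) ≤ n := by
        have hsub : (range m).filter (fun i => j + i < n) ⊆ range n := by
          intro i hi
          simp only [Finset.mem_filter, Finset.mem_range] at hi ⊢
          omega
        have := Finset.card_le_card hsub
        simp only [Finset.card_range] at this
        exact_mod_cast this
      have h := mul_le_mul_of_nonneg_left hcard (by positivity : (0:ℝ) ≤ 1 / (m:ℝ))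
      have e : (n:ℝ)/m = 1/(m:ℝ) * (n:ℝ) := by ring
      linarith
    have hy2 : (1:ℝ) ≤ discNorm (fun i => if i < n then 1 else 0) p n := by
      have hbdd : BddAbove (Set.range (fun j =>
          ((1 / (n : ℝ)) * ∑ i ∈ Finset.range n,
            |(fun i => if i < n then (1:ℝ) else 0) (j + i)| ^ p) ^ ((1:ℝ)/p))) := by
        refine ⟨1, ?_⟩
        rintro _ ⟨j, rfl⟩
        dsimp only
        have hs : ∑ i ∈ range n, |if (j + i) < n then (1:ℝ) else 0| ^ p
            = (((range n).filter (fun i => j + i < n)).card : ℝ) :=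
          sum_ind p hpne (fun t => t < n) j n
        rw [hs]
        have hc : (((range n).filter (fun i => j + i < n)).card : ℝ) ≤ n := by
          exact_mod_cast le_trans (Finset.card_filter_le _ _) (by simp)
        calc ((1 / (n:ℝ)) * ((range n).filter (fun i => j + i < n)).card) ^ ((1:ℝ)/p)
            ≤ ((1 / (n:ℝ)) * n) ^ ((1:ℝ)/p) := by
              apply Real.rpow_le_rpow (by positivity)
              · exact mul_le_mul_of_nonneg_left hc (by positivity)
              · positivity
          _ = 1 := by rw [one_div_mul_cancel (ne_of_gt hnR), Real.one_rpow]
      have h0 : (1:ℝ) ≤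
          ((1 / (n : ℝ)) * ∑ i ∈ Finset.range n,
            |(fun i => if i < n then (1:ℝ) else 0) (0 + i)| ^ p) ^ ((1:ℝ)/p) := by
        dsimp only
        have hs : ∑ i ∈ range n, |if (0 + i) < n then (1:ℝ) else 0| ^ p
            = (((range n).filter (fun i => 0 + i < n)).card : ℝ) :=
          sum_ind p hpne (fun t => t < n) 0 n
        rw [hs]
        have hfil : (range n).filter (fun i => 0 + i < n) = range n := by
          apply Finset.filter_true_of_mem
          intro i hi
          simp only [Finset.mem_range] at hi
          omega
        rw [hfil, Finset.card_range, one_div_mul_cancel (ne_of_gt hnR), Real.one_rpow]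
      exact le_trans h0 (le_ciSup hbdd 0)
    refine lt_of_le_of_lt hy1 (lt_of_lt_of_le ?_ hy2)
    apply Real.rpow_lt_one (by positivity) _ hip
    rw [div_lt_one hmR]
    exact_mod_cast hnm'
end

section
/- Fix n ≥ 1 and define the sequence x(n) by x(n)_i = 1 if i ≡ 1 (mod n) and x(n)_i = 0 otherwise. Then ‖x(n)‖_{∞,p,n}^p = 1/n, and for every m that is not a positive multiple of n, ‖x(n)‖_{∞,p,m}^p > 1/n. -/
open Finset

theorem stmt5 (n : ℕ) (hn : 1 ≤ n) (p : ℝ) (hp : 1 ≤ p)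
    (x : ℕ → ℝ) (hxdef : ∀ i, x i = if i % n = 1 % n then 1 else 0) :
    discNorm x p n ^ p = 1 / (n : ℝ) ∧
      ∀ m : ℕ, 1 ≤ m → ¬ n ∣ m → 1 / (n : ℝ) < discNorm x p m ^ p := by
  have hp0 : 0 < p := lt_of_lt_of_le one_pos hp
  have hpne : p ≠ 0 := ne_of_gt hp0
  have hn0 : 0 < n := hn
  have hterm : ∀ i : ℕ, |x i| ^ p = if i % n = 1 % n then 1 else 0 := by
    intro i
    rw [hxdef i]
    split
    · simp
    · simp [Real.zero_rpow hpne]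
  have hsum : ∀ j k : ℕ, ∑ i ∈ Finset.range k, |x (j + i)| ^ p
      = (((Finset.range k).filter (fun i => (j + i) % n = 1 % n)).card : ℝ) := by
    intro j k
    simp only [hterm]
    rw [Finset.sum_boole]
  have hcard1 : ∀ j : ℕ, ((Finset.range n).filter (fun i => (j + i) % n = 1 % n)).card = 1 := by
    intro j
    rw [Finset.card_eq_one]
    set a0 : ℕ := 1 % n + (n - j % n) with ha0
    refine ⟨a0 % n, ?_⟩
    have hr : j % n < n := Nat.mod_lt _ hn0
    have h1 : 1 % n < n := Nat.mod_lt _ hn0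
    have hj := Nat.div_add_mod j n
    have key : (j + a0 % n) % n = 1 % n := by
      rw [Nat.add_mod, Nat.mod_mod_of_dvd _ dvd_rfl]
      rw [← Nat.add_mod]
      have heq : j + a0 = n * (j / n + 1) + 1 % n := by
        rw [ha0, Nat.mul_add, Nat.mul_one]; omega
      rw [heq, Nat.mul_add_mod, Nat.mod_mod_of_dvd _ dvd_rfl]
    ext b
    simp only [Finset.mem_filter, Finset.mem_range, Finset.mem_singleton]
    constructor
    · rintro ⟨hb, hmod⟩
      have h : j + b ≡ j + a0 % n [MOD n] := by
        unfold Nat.ModEq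
        rw [hmod, key]
      have h2 : b ≡ a0 % n [MOD n] := Nat.ModEq.add_left_cancel' j h
      have h3 : b % n = a0 % n % n := h2
      rwa [Nat.mod_eq_of_lt hb, Nat.mod_mod_of_dvd _ dvd_rfl] at h3
    · rintro rfl
      exact ⟨Nat.mod_lt _ hn0, key⟩
  constructor
  · have hd : discNorm x p n = ((1 : ℝ) / n) ^ (1 / p) := by
      unfold discNorm
      have hconst : ∀ j : ℕ,
          ((1 / (n : ℝ)) * ∑ i ∈ Finset.range n, |x (j + i)| ^ p) ^ (1 / p)
            = ((1 : ℝ) / n) ^ (1 / p) := by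
        intro j
        rw [hsum, hcard1]
        norm_num
      simp only [hconst]
      exact ciSup_const
    rw [hd, ← Real.rpow_mul (by positivity), one_div_mul_cancel hpne, Real.rpow_one]
  · intro m hm hdvd
    have hm0 : (0 : ℝ) < m := by exact_mod_cast hm
    have hnR : (0 : ℝ) < n := by exact_mod_cast hn0
    set s := (Finset.range m).filter (fun i => (1 + i) % n = 1 % n) with hs
    have hc : m / n + 1 ≤ s.card := by
      have : (Finset.range (m / n + 1)).card ≤ s.card := by
        apply Finset.card_le_card_of_injOn (fun t => n * t)
        · intro t ht
          simp only [Finset.mem_coe, Finset.mem_range] at ht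
          simp only [hs, Finset.mem_coe, Finset.mem_filter, Finset.mem_range]
          constructor
          · have h1 : n * t ≤ n * (m / n) := Nat.mul_le_mul_left _ (by omega)
            have h2 := Nat.div_add_mod m n
            have h3 : m % n ≠ 0 := fun h => hdvd (Nat.dvd_of_mod_eq_zero h)
            omega
          · rw [Nat.add_mul_mod_self_left]
        · intro a _ b _ h
          exact Nat.eq_of_mul_eq_mul_left hn0 h
      simpa using this
    have hnc : m < n * s.card := by
      have h2 := Nat.div_add_mod m n
      have hm0' : m % n ≠ 0 := fun h => hdvd (Nat.dvd_of_mod_eq_zero h)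
      have h3 : m % n < n := Nat.mod_lt _ hn0
      calc m < n * (m / n + 1) := by rw [Nat.mul_add, Nat.mul_one]; omega
        _ ≤ n * s.card := Nat.mul_le_mul_left _ hc
    have hbdd : BddAbove (Set.range fun j : ℕ =>
        ((1 / (m : ℝ)) * ∑ i ∈ Finset.range m, |x (j + i)| ^ p) ^ (1 / p)) := by
      refine ⟨1, ?_⟩
      rintro y ⟨j, rfl⟩
      apply Real.rpow_le_one ?_ ?_ (by positivity)
      · positivity
      · have hsle : ∑ i ∈ Finset.range m, |x (j + i)| ^ p ≤ m := by
          calc ∑ i ∈ Finset.range m, |x (j + i)| ^ p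
              ≤ ∑ _i ∈ Finset.range m, (1 : ℝ) := by
                apply Finset.sum_le_sum
                intro i _
                rw [hterm]
                split <;> norm_num
            _ = m := by simp
        rw [one_div, inv_mul_le_iff₀ hm0, mul_one]
        exact hsle
    have hA : ((1 / (m : ℝ)) * s.card) ^ (1 / p) ≤ discNorm x p m := by
      have := le_ciSup hbdd 1
      rwa [hsum 1 m, ← hs] at this
    have h0 : (0 : ℝ) ≤ (1 / (m : ℝ)) * s.card := by positivity
    have hlt : (1 : ℝ) / n < (1 / m) * s.card := by
      rw [one_div (m : ℝ), inv_mul_eq_div, div_lt_div_iff₀ hnR hm0, one_mul]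
      have : (m : ℝ) < n * s.card := by exact_mod_cast hnc
      linarith
    calc (1 : ℝ) / n < (1 / m) * s.card := hlt
      _ = (((1 / (m : ℝ)) * s.card) ^ (1 / p)) ^ p := by
          rw [← Real.rpow_mul h0, one_div_mul_cancel hpne, Real.rpow_one]
      _ ≤ discNorm x p m ^ p := Real.rpow_le_rpow (by positivity) hA hp0.le
end

section
/- Let p ∈ [1,∞) and n, m ∈ ℕ with 1 ≤ n < m. Then for every bounded real sequence x, ‖x‖_{∞,p,m}^p ≤ ((⌊m/n⌋ + 1)·n / m) · ‖x‖_{∞,p,n}^p ≤ 2 ‖x‖_{∞,p,n}^p. -/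
open Finset

lemma disc_term_nonneg (x : ℕ → ℝ) (p : ℝ) (n : ℕ) (j : ℕ) :
    0 ≤ ((1 / (n : ℝ)) * ∑ i ∈ Finset.range n, |x (j + i)| ^ p) ^ (1 / p) := by
  apply Real.rpow_nonneg
  apply mul_nonneg (by positivity)
  exact Finset.sum_nonneg fun i _ => Real.rpow_nonneg (abs_nonneg _) p

lemma rpow_od (b p : ℝ) (hb : 0 ≤ b) (hp : p ≠ 0) : (b ^ (1 / p)) ^ p = b := by
  rw [← Real.rpow_mul hb, one_div, inv_mul_cancel₀ hp, Real.rpow_one]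

lemma disc_bdd (x : ℕ → ℝ) (p : ℝ) (hp : 1 ≤ p) (C : ℝ) (hC : ∀ i, |x i| ≤ C)
    (n : ℕ) (hn : 1 ≤ n) :
    BddAbove (Set.range fun j : ℕ =>
      ((1 / (n : ℝ)) * ∑ i ∈ Finset.range n, |x (j + i)| ^ p) ^ (1 / p)) := by
  have hp0 : 0 < p := lt_of_lt_of_le one_pos hp
  have hC0 : 0 ≤ C := le_trans (abs_nonneg _) (hC 0)
  refine ⟨C, ?_⟩
  rintro _ ⟨j, rfl⟩
  have hb : (1 / (n : ℝ)) * ∑ i ∈ Finset.range n, |x (j + i)| ^ p ≤ C ^ p := by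
    have hsum : ∑ i ∈ Finset.range n, |x (j + i)| ^ p ≤ n * C ^ p := by
      calc ∑ i ∈ Finset.range n, |x (j + i)| ^ p
          ≤ ∑ i ∈ Finset.range n, C ^ p :=
            Finset.sum_le_sum fun i _ =>
              Real.rpow_le_rpow (abs_nonneg _) (hC _) hp0.le
        _ = n * C ^ p := by simp [mul_comm]
    have hn0 : (0:ℝ) < n := by exact_mod_cast hn
    calc (1 / (n : ℝ)) * ∑ i ∈ Finset.range n, |x (j + i)| ^ p
        ≤ (1 / (n : ℝ)) * (n * C ^ p) := by
          apply mul_le_mul_of_nonneg_left hsum (by positivity)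
      _ = C ^ p := by field_simp
  calc ((1 / (n : ℝ)) * ∑ i ∈ Finset.range n, |x (j + i)| ^ p) ^ (1 / p)
      ≤ (C ^ p) ^ (1 / p) := by
        apply Real.rpow_le_rpow _ hb (by positivity)
        exact mul_nonneg (by positivity)
          (Finset.sum_nonneg fun i _ => Real.rpow_nonneg (abs_nonneg _) p)
    _ = C := by
        rw [one_div, Real.rpow_rpow_inv hC0 (ne_of_gt hp0)]

theorem stmt6 (p : ℝ) (hp : 1 ≤ p) (n m : ℕ) (hn : 1 ≤ n) (hnm : n < m)
    (x : ℕ → ℝ) (hx : ∃ C, ∀ i, |x i| ≤ C) :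
    discNorm x p m ^ p ≤ (((m / n : ℕ) + 1) * (n : ℝ) / (m : ℝ)) * discNorm x p n ^ p ∧
      (((m / n : ℕ) + 1) * (n : ℝ) / (m : ℝ)) * discNorm x p n ^ p ≤
        2 * discNorm x p n ^ p := by
  obtain ⟨C, hC⟩ := hx
  have hp0 : 0 < p := lt_of_lt_of_le one_pos hp
  have hm : 1 ≤ m := le_of_lt (lt_of_le_of_lt hn hnm)
  have hn0 : (0:ℝ) < n := by exact_mod_cast hn
  have hm0 : (0:ℝ) < m := by exact_mod_cast hm
  set f : ℕ → ℝ := fun i => |x i| ^ p with hf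
  have hf0 : ∀ i, 0 ≤ f i := fun i => Real.rpow_nonneg (abs_nonneg _) p
  set q : ℕ := m / n with hq
  set c : ℝ := ((q : ℝ) + 1) * (n : ℝ) / (m : ℝ) with hc
  set T : ℝ := discNorm x p n ^ p with hT
  have bddn := disc_bdd x p hp C hC n hn
  have bddm := disc_bdd x p hp C hC m hm
  -- nonnegativity of discNorms
  have hSn0 : 0 ≤ discNorm x p n :=
    le_trans (disc_term_nonneg x p n 0) (le_ciSup bddn 0)
  have hSm0 : 0 ≤ discNorm x p m :=
    le_trans (disc_term_nonneg x p m 0) (le_ciSup bddm 0)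
  have hT0 : 0 ≤ T := Real.rpow_nonneg hSn0 p
  -- each n-block mean is ≤ T
  have hmean : ∀ j, (1 / (n : ℝ)) * ∑ i ∈ Finset.range n, f (j + i) ≤ T := by
    intro j
    have h1 : ((1 / (n : ℝ)) * ∑ i ∈ Finset.range n, f (j + i)) ^ (1 / p)
        ≤ discNorm x p n := le_ciSup bddn j
    have h2 := Real.rpow_le_rpow (disc_term_nonneg x p n j) h1 hp0.le
    rwa [rpow_od _ _ (mul_nonneg (by positivity)
      (Finset.sum_nonneg fun i _ => hf0 _)) (ne_of_gt hp0)] at h2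
  have hblock : ∀ j, ∑ i ∈ Finset.range n, f (j + i) ≤ n * T := by
    intro j
    have := mul_le_mul_of_nonneg_left (hmean j) hn0.le
    calc ∑ i ∈ Finset.range n, f (j + i)
        = (n : ℝ) * ((1 / (n : ℝ)) * ∑ i ∈ Finset.range n, f (j + i)) := by
          field_simp
      _ ≤ (n : ℝ) * T := this
  -- multi-block bound
  have hmulti : ∀ k j, ∑ i ∈ Finset.range (k * n), f (j + i) ≤ k * ((n : ℝ) * T) := by
    intro k
    induction k with
    | zero => intro j; simp
    | succ k ih =>
      intro j
      have hsplit : ∑ i ∈ Finset.range ((k + 1) * n), f (j + i)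
          = ∑ i ∈ Finset.range (k * n), f (j + i)
            + ∑ i ∈ Finset.range n, f (j + k * n + i) := by
        rw [add_mul, one_mul, Finset.sum_range_add]
        congr 1
        apply Finset.sum_congr rfl
        intro i _
        ring_nf
      rw [hsplit]
      push_cast
      have := hblock (j + k * n)
      nlinarith [ih j]
  -- key bound for m-window means
  have hkey : ∀ j, (1 / (m : ℝ)) * ∑ i ∈ Finset.range m, f (j + i) ≤ c * T := by
    intro j
    have hmle : m ≤ (q + 1) * n := by
      have h := (Nat.div_lt_iff_lt_mul (show 0 < n by omega)).1 (Nat.lt_succ_self q)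
      calc m ≤ q.succ * n := h.le
        _ = (q + 1) * n := rfl
    have hsub : ∑ i ∈ Finset.range m, f (j + i)
        ≤ ∑ i ∈ Finset.range ((q + 1) * n), f (j + i) :=
      Finset.sum_le_sum_of_subset_of_nonneg
        (Finset.range_subset_range.2 hmle) (fun i _ _ => hf0 _)
    have h2 := le_trans hsub (hmulti (q + 1) j)
    calc (1 / (m : ℝ)) * ∑ i ∈ Finset.range m, f (j + i)
        ≤ (1 / (m : ℝ)) * (((q : ℝ) + 1) * ((n : ℝ) * T)) := by
          apply mul_le_mul_of_nonneg_left _ (by positivity)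
          convert h2 using 2
          push_cast; ring
      _ = c * T := by rw [hc]; field_simp
  have hcT0 : 0 ≤ c * T := mul_nonneg (by positivity) hT0
  constructor
  · have hSm : discNorm x p m ≤ (c * T) ^ (1 / p) := by
      apply ciSup_le
      intro j
      apply Real.rpow_le_rpow _ (hkey j) (by positivity)
      exact mul_nonneg (by positivity) (Finset.sum_nonneg fun i _ => hf0 _)
    have h4 := Real.rpow_le_rpow hSm0 hSm hp0.le
    rwa [rpow_od _ _ hcT0 (ne_of_gt hp0)] at h4
  · have hc2 : c ≤ 2 := by
      rw [hc, div_le_iff₀ hm0]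
      have h1 : q * n ≤ m := Nat.div_mul_le_self m n
      have h2 : (q : ℝ) * n ≤ m := by exact_mod_cast h1
      have h3 : (n : ℝ) ≤ m := by exact_mod_cast hnm.le
      nlinarith
    exact mul_le_mul_of_nonneg_right hc2 hT0
end

section
/- Let N = 1, p ∈ [1,∞), and T, S > 0 with T < S and S/T ∉ ℕ. Then there exist measurable functions f, g : ℝ → ℝ with finite norms such that ‖f‖_{p,T} < ‖f‖_{p,S} and ‖g‖_{p,S} < ‖g‖_{p,T}, where ‖h‖_{p,L} = sup over open intervals I of length L of ((1/L) ∫_I |h|^p)^{1/p}. -/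
open MeasureTheory ENNReal

/-- `‖h‖_{p,L}`: sup over open intervals of length `L` of `((1/L) ∫_I |h|^p)^(1/p)`. -/
noncomputable def intNorm (p L : ℝ) (h : ℝ → ℝ) : ℝ≥0∞ :=
  ⨆ a : ℝ, (ENNReal.ofReal (1 / L) * ∫⁻ x in Set.Ioo a (a + L), ENNReal.ofReal (|h x| ^ p)) ^ (1 / p)

lemma disj_Ioo {x₁ y₁ x₂ y₂ : ℝ} (h : y₁ ≤ x₂) :
    Disjoint (Set.Ioo x₁ y₁) (Set.Ioo x₂ y₂) := by
  refine Set.disjoint_left.mpr fun t ht ht2 => ?_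
  have := ht.2; have := ht2.1; linarith

lemma ind_rpow (p : ℝ) (hp : p ≠ 0) (E : Set ℝ) (x : ℝ) :
    ENNReal.ofReal (|E.indicator (fun _ => (1:ℝ)) x| ^ p) = E.indicator (fun _ => (1:ℝ≥0∞)) x := by
  by_cases hx : x ∈ E <;> simp [hx, Real.zero_rpow hp]

lemma intNorm_indicator (p L : ℝ) (hp : p ≠ 0) {E : Set ℝ} (hE : MeasurableSet E) :
    intNorm p L (E.indicator fun _ => 1) =
      ⨆ a : ℝ, (ENNReal.ofReal (1 / L) * volume (E ∩ Set.Ioo a (a + L))) ^ (1 / p) := by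
  unfold intNorm
  refine iSup_congr fun a => ?_
  rw [lintegral_congr (ind_rpow p hp E)]
  simp [lintegral_indicator hE, Measure.restrict_apply hE]

lemma window_bound {T ε : ℝ} (hT : 0 < T) (k : ℕ) (a : ℝ) :
    volume ((⋃ j ∈ Finset.range k, Set.Ioo (j * T) (j * T + ε)) ∩ Set.Ioo a (a + T)) ≤
      ENNReal.ofReal ε := by
  set Q : ℕ → Set ℝ := fun j => Set.Ioo (max 0 (a - j * T)) (min ε (a - j * T + T)) with hQ
  have hQsub : ∀ j : ℕ, Q j ⊆ Set.Ioo (a - j * T) (a - j * T + T) :=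
    fun j => Set.Ioo_subset_Ioo (le_max_right _ _) (min_le_right _ _)
  have hdisj : (↑(Finset.range k) : Set ℕ).PairwiseDisjoint Q := by
    intro i _ j _ hij
    rcases lt_or_gt_of_ne hij with h | h
    · -- i < j : a - j*T + T ≤ a - i*T
      have hc : (i : ℝ) + 1 ≤ (j : ℝ) := by exact_mod_cast h
      refine Disjoint.mono (hQsub i) (hQsub j) (disj_Ioo ?_).symm
      nlinarith
    · have hc : (j : ℝ) + 1 ≤ (i : ℝ) := by exact_mod_cast h
      refine Disjoint.mono (hQsub i) (hQsub j) (disj_Ioo ?_)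
      nlinarith
  calc volume ((⋃ j ∈ Finset.range k, Set.Ioo (j * T) (j * T + ε)) ∩ Set.Ioo a (a + T))
      = volume (⋃ j ∈ Finset.range k, Set.Ioo (j * T) (j * T + ε) ∩ Set.Ioo a (a + T)) := by
        rw [Set.iUnion₂_inter]
    _ ≤ ∑ j ∈ Finset.range k, volume (Set.Ioo (j * T) (j * T + ε) ∩ Set.Ioo a (a + T)) :=
        measure_biUnion_finset_le _ _
    _ = ∑ j ∈ Finset.range k, volume (Q j) := by
        refine Finset.sum_congr rfl fun j _ => ?_
        rw [Set.Ioo_inter_Ioo, hQ, Real.volume_Ioo, Real.volume_Ioo]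
        congr 1
        rcases le_total ε (a - j * T + T) with h1 | h1 <;>
          rcases le_total (0:ℝ) (a - j * T) with h2 | h2 <;>
          rcases le_total (j * T + ε) (a + T) with h3 | h3 <;>
          rcases le_total (j * T : ℝ) a with h4 | h4 <;>
          simp [min_def, max_def] <;> split_ifs <;> linarith
    _ = volume (⋃ j ∈ Finset.range k, Q j) :=
        (measure_biUnion_finset hdisj fun _ _ => measurableSet_Ioo).symm
    _ ≤ volume (Set.Ioo 0 ε) := by
        refine measure_mono (Set.iUnion₂_subset fun j _ => ?_)
        exact Set.Ioo_subset_Ioo (le_max_left _ _) (min_le_left _ _)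
    _ ≤ ENNReal.ofReal ε := by rw [Real.volume_Ioo]; simp

lemma bumps_vol {T ε : ℝ} (hT : 0 < T) (hεT : ε ≤ T) (k : ℕ) :
    volume (⋃ j ∈ Finset.range k, Set.Ioo (j * T) (j * T + ε)) = k * ENNReal.ofReal ε := by
  have hdisj : (↑(Finset.range k) : Set ℕ).PairwiseDisjoint
      (fun j : ℕ => Set.Ioo (j * T) (j * T + ε)) := by
    intro i _ j _ hij
    rcases lt_or_gt_of_ne hij with h | h
    · have hc : (i : ℝ) + 1 ≤ (j : ℝ) := by exact_mod_cast h
      refine disj_Ioo ?_; nlinarith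
    · have hc : (j : ℝ) + 1 ≤ (i : ℝ) := by exact_mod_cast h
      refine (disj_Ioo ?_).symm; nlinarith
  rw [measure_biUnion_finset hdisj fun _ _ => measurableSet_Ioo]
  simp [Real.volume_Ioo, mul_comm]

theorem stmt12 (p : ℝ) (hp : 1 ≤ p) (T S : ℝ) (hT : 0 < T) (hTS : T < S)
    (hfac : ¬ ∃ k : ℕ, S / T = (k : ℝ)) :
    ∃ f g : ℝ → ℝ, Measurable f ∧ Measurable g ∧
      intNorm p T f < ⊤ ∧ intNorm p S f < ⊤ ∧ intNorm p T g < ⊤ ∧ intNorm p S g < ⊤ ∧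
      intNorm p T f < intNorm p S f ∧ intNorm p S g < intNorm p T g := by
  have hp0 : p ≠ 0 := by linarith
  have hp0' : (0:ℝ) < 1 / p := by positivity
  have hS : (0:ℝ) < S := hT.trans hTS
  -- the integer k with (k-1)T < S < kT
  set k : ℕ := ⌈S / T⌉₊ with hk
  have hST1 : (1:ℝ) < S / T := (one_lt_div hT).mpr hTS
  have hk1 : 1 ≤ k := Nat.one_le_ceil_iff.mpr (by linarith)
  have hkS : S < k * T := by
    have h1 : S / T ≤ (k : ℝ) := Nat.le_ceil _
    have h2 : S / T ≠ (k : ℝ) := fun h => hfac ⟨k, h⟩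
    have : S / T < (k : ℝ) := lt_of_le_of_ne h1 h2
    calc S = S / T * T := by field_simp
    _ < k * T := by nlinarith
  have hk1S : ((k : ℝ) - 1) * T < S := by
    have : (k - 1 : ℕ) < k := Nat.sub_lt hk1 one_pos
    have h2 : ((k - 1 : ℕ) : ℝ) < S / T := Nat.lt_ceil.mp (hk ▸ this)
    have h3 : ((k - 1 : ℕ) : ℝ) = (k : ℝ) - 1 := by
      push_cast [Nat.cast_sub hk1]; ring
    rw [h3] at h2
    calc ((k:ℝ) - 1) * T < S / T * T := by nlinarith
    _ = S := by field_simp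
  set r : ℝ := S - ((k:ℝ) - 1) * T with hr
  have hr0 : 0 < r := by simp [hr]; linarith
  have hrT : r < T := by simp [hr]; nlinarith
  set ε : ℝ := r / 2 with hε
  have hε0 : 0 < ε := by positivity
  have hεT : ε ≤ T := by simp [hε]; linarith
  set E : Set ℝ := ⋃ j ∈ Finset.range k, Set.Ioo (j * T) (j * T + ε) with hE
  have hEm : MeasurableSet E := by
    exact Finset.measurableSet_biUnion _ fun _ _ => measurableSet_Ioo
  set G : Set ℝ := Set.Ioo (0:ℝ) T with hG
  have hGm : MeasurableSet G := measurableSet_Ioo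
  refine ⟨E.indicator fun _ => 1, G.indicator fun _ => 1,
    (measurable_const).indicator hEm, (measurable_const).indicator hGm, ?_⟩
  rw [intNorm_indicator p T hp0 hEm, intNorm_indicator p S hp0 hEm,
    intNorm_indicator p T hp0 hGm, intNorm_indicator p S hp0 hGm]
  -- volume of E
  have hvolE : volume E = k * ENNReal.ofReal ε := bumps_vol hT hεT k
  -- key bounds
  have hfT : (⨆ a : ℝ, (ENNReal.ofReal (1 / T) * volume (E ∩ Set.Ioo a (a + T))) ^ (1 / p)) ≤
      ENNReal.ofReal (ε / T) ^ (1 / p) := by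
    refine iSup_le fun a => ENNReal.rpow_le_rpow ?_ hp0'.le
    calc ENNReal.ofReal (1 / T) * volume (E ∩ Set.Ioo a (a + T))
        ≤ ENNReal.ofReal (1 / T) * ENNReal.ofReal ε :=
          mul_le_mul_right (window_bound hT k a) _
      _ = ENNReal.ofReal (ε / T) := by
          rw [← ENNReal.ofReal_mul (by positivity)]; congr 1; field_simp
  have hkε : ENNReal.ofReal (1 / S) * ((k:ℝ≥0∞) * ENNReal.ofReal ε) =
      ENNReal.ofReal ((k:ℝ) * ε / S) := by
    rw [← ENNReal.ofReal_natCast, ← ENNReal.ofReal_mul (by positivity),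
      ← ENNReal.ofReal_mul (by positivity)]
    congr 1; field_simp
  have hfS_ub : (⨆ a : ℝ, (ENNReal.ofReal (1 / S) * volume (E ∩ Set.Ioo a (a + S))) ^ (1 / p)) ≤
      ENNReal.ofReal ((k:ℝ) * ε / S) ^ (1 / p) := by
    refine iSup_le fun a => ENNReal.rpow_le_rpow ?_ hp0'.le
    rw [← hkε, ← hvolE]
    exact mul_le_mul_right (measure_mono Set.inter_subset_left) _
  have hfS_lb : ENNReal.ofReal ((k:ℝ) * ε / S) ^ (1 / p) ≤
      ⨆ a : ℝ, (ENNReal.ofReal (1 / S) * volume (E ∩ Set.Ioo a (a + S))) ^ (1 / p) := by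
    refine le_iSup_of_le (-(ε/2)) (le_of_eq ?_)
    have hsub : E ⊆ Set.Ioo (-(ε/2)) (-(ε/2) + S) := by
      refine Set.iUnion₂_subset fun j hj => ?_
      have hjk : (j:ℝ) ≤ (k:ℝ) - 1 := by
        have := Finset.mem_range.mp hj
        have : (j:ℝ) + 1 ≤ (k:ℝ) := by exact_mod_cast this
        linarith
      refine Set.Ioo_subset_Ioo ?_ ?_
      · nlinarith
      · have h1 : (j:ℝ) * T ≤ ((k:ℝ) - 1) * T := by nlinarith
        have h2 : ε = (S - ((k:ℝ) - 1) * T) / 2 := by rw [hε, hr]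
        linarith [hε0]
    rw [Set.inter_eq_self_of_subset_left hsub, hvolE, hkε]
  have hbase : ENNReal.ofReal (ε / T) < ENNReal.ofReal ((k:ℝ) * ε / S) := by
    rw [ENNReal.ofReal_lt_ofReal_iff (by positivity)]
    rw [div_lt_div_iff₀ hT hS]
    nlinarith
  have hmain : ENNReal.ofReal (ε / T) ^ (1 / p) < ENNReal.ofReal ((k:ℝ) * ε / S) ^ (1 / p) :=
    ENNReal.rpow_lt_rpow hbase hp0'
  have hfSfin : ENNReal.ofReal ((k:ℝ) * ε / S) ^ (1 / p) < ⊤ :=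
    ENNReal.rpow_lt_top_of_nonneg hp0'.le ENNReal.ofReal_ne_top
  -- g bounds
  have hgT : (⨆ a : ℝ, (ENNReal.ofReal (1 / T) * volume (G ∩ Set.Ioo a (a + T))) ^ (1 / p)) = 1 := by
    refine le_antisymm (iSup_le fun a => ?_) (le_iSup_of_le 0 (le_of_eq ?_))
    · calc (ENNReal.ofReal (1 / T) * volume (G ∩ Set.Ioo a (a + T))) ^ (1/p)
          ≤ (ENNReal.ofReal (1 / T) * ENNReal.ofReal T) ^ (1/p) := by
            refine ENNReal.rpow_le_rpow (mul_le_mul_right ?_ _) hp0'.le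
            calc volume (G ∩ Set.Ioo a (a + T)) ≤ volume (Set.Ioo a (a + T)) :=
                measure_mono Set.inter_subset_right
            _ = ENNReal.ofReal T := by rw [Real.volume_Ioo]; ring_nf
        _ = 1 := by
            rw [← ENNReal.ofReal_mul (by positivity), one_div_mul_cancel hT.ne',
              ENNReal.ofReal_one, ENNReal.one_rpow]
    · rw [zero_add, hG, Set.inter_self, Real.volume_Ioo, sub_zero,
        ← ENNReal.ofReal_mul (by positivity), one_div_mul_cancel hT.ne',
        ENNReal.ofReal_one, ENNReal.one_rpow]
  have hgS : (⨆ a : ℝ, (ENNReal.ofReal (1 / S) * volume (G ∩ Set.Ioo a (a + S))) ^ (1 / p)) ≤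
      ENNReal.ofReal (T / S) ^ (1 / p) := by
    refine iSup_le fun a => ENNReal.rpow_le_rpow ?_ hp0'.le
    calc ENNReal.ofReal (1 / S) * volume (G ∩ Set.Ioo a (a + S))
        ≤ ENNReal.ofReal (1 / S) * ENNReal.ofReal T := by
          refine mul_le_mul_right ?_ _
          calc volume (G ∩ Set.Ioo a (a + S)) ≤ volume G := measure_mono Set.inter_subset_left
          _ = ENNReal.ofReal T := by rw [hG, Real.volume_Ioo, sub_zero]
      _ = ENNReal.ofReal (T / S) := by
          rw [← ENNReal.ofReal_mul (by positivity)]; congr 1; field_simp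
  have hgSlt : ENNReal.ofReal (T / S) ^ (1 / p) < 1 := by
    refine ENNReal.rpow_lt_one ?_ hp0'
    rw [← ENNReal.ofReal_one]
    exact ENNReal.ofReal_lt_ofReal_iff_of_nonneg (by positivity) |>.mpr
      ((div_lt_one hS).mpr hTS)
  refine ⟨lt_of_le_of_lt hfT (hmain.trans_le (le_of_lt hfSfin)), ?_, ?_, ?_, ?_, ?_⟩
  · exact lt_of_le_of_lt hfS_ub hfSfin
  · rw [hgT]; exact one_lt_top
  · exact lt_of_le_of_lt hgS (hgSlt.trans one_lt_top)
  · exact lt_of_le_of_lt hfT (lt_of_lt_of_le hmain hfS_lb)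
  · rw [hgT]; exact lt_of_le_of_lt hgS hgSlt
end

section
/- Let p ∈ [1,∞) and 0 < T < S. Then for every measurable f : ℝ → ℝ, ‖f‖_{p,S}^p ≤ ((⌊S/T⌋ + 1)·T / S) ‖f‖_{p,T}^p ≤ 2 ‖f‖_{p,T}^p, where ‖f‖_{p,L}^p = sup over open intervals I of length L of (1/L) ∫_I |f|^p. -/
open MeasureTheory ENNReal

/-- `‖h‖_{p,L}^p`: sup over open intervals of length `L` of `(1/L) ∫_I |h|^p`. -/
noncomputable def intNormP (p L : ℝ) (h : ℝ → ℝ) : ℝ≥0∞ :=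
  ⨆ a : ℝ, ENNReal.ofReal (1 / L) * ∫⁻ x in Set.Ioo a (a + L), ENNReal.ofReal (|h x| ^ p)

theorem stmt13 (p : ℝ) (hp : 1 ≤ p) (T S : ℝ) (hT : 0 < T) (hTS : T < S)
    (f : ℝ → ℝ) (hf : Measurable f) :
    intNormP p S f ≤ ENNReal.ofReal (((⌊S / T⌋ : ℝ) + 1) * T / S) * intNormP p T f ∧
      ENNReal.ofReal (((⌊S / T⌋ : ℝ) + 1) * T / S) * intNormP p T f ≤
        2 * intNormP p T f := by
  have hS : (0:ℝ) < S := hT.trans hTS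
  set g : ℝ → ℝ≥0∞ := fun x => ENNReal.ofReal (|f x| ^ p) with hg
  set I := intNormP p T f with hI
  -- floor facts
  have hST1 : (1:ℝ) ≤ S / T := (one_le_div hT).mpr hTS.le
  have hfl1 : (1:ℤ) ≤ ⌊S / T⌋ := by
    exact_mod_cast Int.le_floor.mpr (by exact_mod_cast hST1)
  set N : ℕ := (⌊S / T⌋).toNat + 1 with hN
  have hNcast : ((N : ℝ)) = (⌊S / T⌋ : ℝ) + 1 := by
    have : ((⌊S / T⌋).toNat : ℝ) = (⌊S / T⌋ : ℝ) := by
      exact_mod_cast Int.toNat_of_nonneg (by linarith : (0:ℤ) ≤ ⌊S / T⌋)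
    simp [hN, this]
  have hSNT : S ≤ (N : ℝ) * T := by
    have h1 : S / T < (⌊S / T⌋ : ℝ) + 1 := Int.lt_floor_add_one _
    rw [hNcast]
    calc S = S / T * T := by field_simp
    _ ≤ ((⌊S / T⌋ : ℝ) + 1) * T := by nlinarith
  -- Lemma A
  have hA : ∀ b : ℝ, ∫⁻ x in Set.Ico b (b + T), g x ≤ ENNReal.ofReal T * I := by
    intro b
    have heq : ∫⁻ x in Set.Ico b (b + T), g x = ∫⁻ x in Set.Ioo b (b + T), g x := by
      refine setLIntegral_congr ?_
      exact Ioo_ae_eq_Ico.symm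
    rw [heq]
    have hle : ENNReal.ofReal (1 / T) * ∫⁻ x in Set.Ioo b (b + T), g x ≤ I :=
      le_iSup (fun a : ℝ => ENNReal.ofReal (1 / T) * ∫⁻ x in Set.Ioo a (a + T), g x) b
    calc ∫⁻ x in Set.Ioo b (b + T), g x
        = (ENNReal.ofReal T * ENNReal.ofReal (1 / T)) * ∫⁻ x in Set.Ioo b (b + T), g x := by
          rw [← ENNReal.ofReal_mul hT.le]
          rw [mul_one_div_cancel hT.ne', ENNReal.ofReal_one, one_mul]
      _ = ENNReal.ofReal T * (ENNReal.ofReal (1 / T) * ∫⁻ x in Set.Ioo b (b + T), g x) := by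
          ring
      _ ≤ ENNReal.ofReal T * I := mul_le_mul_right hle _
  -- Lemma B by induction
  have hB : ∀ (n : ℕ) (a : ℝ), ∫⁻ x in Set.Ico a (a + n * T), g x ≤
      (n : ℝ≥0∞) * (ENNReal.ofReal T * I) := by
    intro n
    induction n with
    | zero => intro a; simp
    | succ n ih =>
        intro a
        have hsplit : Set.Ico a (a + (n + 1 : ℕ) * T) =
            Set.Ico a (a + n * T) ∪ Set.Ico (a + n * T) (a + n * T + T) := by
          rw [Set.Ico_union_Ico_eq_Ico]
          · congr 1; push_cast; ring
          · nlinarith [hT.le, Nat.cast_nonneg (α := ℝ) n]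
          · linarith
        rw [hsplit]
        calc ∫⁻ x in Set.Ico a (a + n * T) ∪ Set.Ico (a + n * T) (a + n * T + T), g x
            ≤ (∫⁻ x in Set.Ico a (a + n * T), g x) +
              ∫⁻ x in Set.Ico (a + n * T) (a + n * T + T), g x := lintegral_union_le _ _ _
          _ ≤ (n : ℝ≥0∞) * (ENNReal.ofReal T * I) + ENNReal.ofReal T * I :=
              add_le_add (ih a) (hA _)
          _ = ((n + 1 : ℕ) : ℝ≥0∞) * (ENNReal.ofReal T * I) := by
              push_cast; ring
  constructor
  · rw [intNormP]
    apply iSup_le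
    intro a
    have hsub : Set.Ioo a (a + S) ⊆ Set.Ico a (a + N * T) := by
      intro x hx
      exact ⟨hx.1.le, lt_of_lt_of_le hx.2 (by linarith)⟩
    have hmono : ∫⁻ x in Set.Ioo a (a + S), g x ≤ ∫⁻ x in Set.Ico a (a + N * T), g x :=
      lintegral_mono_set hsub
    calc ENNReal.ofReal (1 / S) * ∫⁻ x in Set.Ioo a (a + S), g x
        ≤ ENNReal.ofReal (1 / S) * ((N : ℝ≥0∞) * (ENNReal.ofReal T * I)) :=
          mul_le_mul_right (hmono.trans (hB N a)) _
      _ = (ENNReal.ofReal (1 / S) * ENNReal.ofReal (N : ℝ) * ENNReal.ofReal T) * I := by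
          rw [ENNReal.ofReal_natCast]; ring
      _ = ENNReal.ofReal (((⌊S / T⌋ : ℝ) + 1) * T / S) * I := by
          rw [← ENNReal.ofReal_mul (by positivity), ← ENNReal.ofReal_mul (by positivity)]
          congr 1
          rw [← hNcast]
          field_simp
  · have hc : ((⌊S / T⌋ : ℝ) + 1) * T / S ≤ 2 := by
      have h1 : (1:ℝ) ≤ (⌊S / T⌋ : ℝ) := by exact_mod_cast hfl1
      have h2 : (⌊S / T⌋ : ℝ) ≤ S / T := Int.floor_le _
      have h3 : (⌊S / T⌋ : ℝ) * T ≤ S := (le_div_iff₀ hT).mp h2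
      rw [div_le_iff₀ hS]
      nlinarith
    calc ENNReal.ofReal (((⌊S / T⌋ : ℝ) + 1) * T / S) * I
        ≤ ENNReal.ofReal 2 * I := mul_le_mul_left (ENNReal.ofReal_le_ofReal hc) _
      _ = 2 * I := by norm_num
end

section
/- Let T, S > 0 with T < S and S/T ∉ ℕ, let d = ⌊S/T⌋, and choose ε > 0 with (d+1)ε < S − dT. Let ψ : ℝ → ℝ be measurable, supported in (0, ε), with ∫ |ψ|^p = 1, and set f(x) = ∑_{i=0}^{d} ψ(x − i(T+ε)). Then ‖f‖_{p,T}^p = 1/T and ‖f‖_{p,S}^p = (d+1)/S, and 1/T < (d+1)/S. -/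
open MeasureTheory ENNReal

theorem stmt14 (p : ℝ) (hp : 1 ≤ p) (T S : ℝ) (hT : 0 < T) (hTS : T < S)
    (hfac : ¬ ∃ k : ℕ, S / T = (k : ℝ)) (d : ℕ) (hd : d = ⌊S / T⌋₊)
    (ε : ℝ) (hε : 0 < ε) (hεsmall : ((d : ℝ) + 1) * ε < S - (d : ℝ) * T)
    (ψ : ℝ → ℝ) (hψ : Measurable ψ) (hsupp : Function.support ψ ⊆ Set.Ioo 0 ε)
    (hmass : ∫⁻ x, ENNReal.ofReal (|ψ x| ^ p) = 1)
    (f : ℝ → ℝ) (hfdef : ∀ x, f x = ∑ i ∈ Finset.range (d + 1), ψ (x - (i : ℝ) * (T + ε))) :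
    intNormP p T f = ENNReal.ofReal (1 / T) ∧
      intNormP p S f = ENNReal.ofReal (((d : ℝ) + 1) / S) ∧
      1 / T < ((d : ℝ) + 1) / S := by
  have hp0 : p ≠ 0 := by linarith
  have hS : 0 < S := lt_trans hT hTS
  -- basic inequalities
  have hdlt : S / T < (d : ℝ) + 1 := by rw [hd]; exact_mod_cast Nat.lt_floor_add_one (S / T)
  have hSdT : S < ((d : ℝ) + 1) * T := by
    have := (div_lt_iff₀ hT).mp hdlt; linarith
  have hεT : ε < T := by
    have h1 : ε ≤ ((d : ℝ) + 1) * ε := by nlinarith [Nat.cast_nonneg (α := ℝ) d, hε.le]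
    nlinarith
  set c : ℕ → ℝ := fun i => (i : ℝ) * (T + ε) with hc
  set g : ℝ → ℝ≥0∞ := fun y => ENNReal.ofReal (|ψ y| ^ p) with hgdef
  have hg_meas : Measurable g := by
    apply Measurable.ennreal_ofReal
    exact (hψ.abs).pow_const p
  have hg0 : ∀ y, y ∉ Set.Ioo 0 ε → g y = 0 := by
    intro y hy
    have : ψ y = 0 := by
      by_contra h
      exact hy (hsupp h)
    simp [hgdef, this, Real.zero_rpow hp0]
  have hgind : ∀ y, g y = (Set.Ioo 0 ε).indicator g y := by
    intro y
    by_cases hy : y ∈ Set.Ioo 0 ε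
    · simp [Set.indicator_of_mem hy]
    · simp [Set.indicator_of_notMem hy, hg0 y hy]
  have hgint : ∫⁻ y, g y = 1 := hmass
  -- each translate has full integral 1
  have hshift : ∀ r : ℝ, ∫⁻ x, g (x - r) = 1 := by
    intro r
    rw [lintegral_sub_right_eq_self g r]; exact hgint
  have hle1 : ∀ (r : ℝ) (A : Set ℝ), ∫⁻ x in A, g (x - r) ≤ 1 := by
    intro r A
    calc ∫⁻ x in A, g (x - r) ≤ ∫⁻ x, g (x - r) := setLIntegral_le_lintegral _ _
    _ = 1 := hshift r
  -- supports are separated: j > i gives c j ≥ c i + T + ε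
  have hcsep : ∀ i j : ℕ, i < j → c i + T + ε ≤ c j := by
    intro i j hij
    have : (i : ℝ) + 1 ≤ (j : ℝ) := by exact_mod_cast hij
    have hTε : (0:ℝ) < T + ε := by linarith
    simp only [hc]
    nlinarith
  -- pointwise identity
  have hF : ∀ x, ENNReal.ofReal (|f x| ^ p) =
      ∑ i ∈ Finset.range (d + 1), g (x - c i) := by
    intro x
    have huniq : ∀ i j : ℕ, i ≠ j → x - c i ∈ Set.Ioo 0 ε → x - c j ∈ Set.Ioo 0 ε → False := by
      intro i j hij hi hj
      rcases Ne.lt_or_gt hij with h | h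
      · have := hcsep i j h
        simp only [Set.mem_Ioo] at hi hj
        linarith
      · have := hcsep j i h
        simp only [Set.mem_Ioo] at hi hj
        linarith
    by_cases hex : ∃ i ∈ Finset.range (d + 1), x - c i ∈ Set.Ioo 0 ε
    · obtain ⟨i₀, hi₀mem, hi₀⟩ := hex
      have hothers : ∀ j, j ≠ i₀ → ψ (x - c j) = 0 := by
        intro j hj
        by_contra h
        exact huniq j i₀ hj (hsupp h) hi₀
      have hfx : f x = ψ (x - c i₀) := by
        rw [hfdef x]
        exact Finset.sum_eq_single_of_mem i₀ hi₀mem (fun j _ hj => hothers j hj)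
      have hgothers : ∀ j, j ≠ i₀ → g (x - c j) = 0 := by
        intro j hj
        apply hg0
        intro h
        exact huniq j i₀ hj h hi₀
      rw [hfx]
      rw [Finset.sum_eq_single_of_mem i₀ hi₀mem (fun j _ hj => hgothers j hj)]
    · push_neg at hex
      have : ∀ j ∈ Finset.range (d + 1), ψ (x - c j) = 0 := by
        intro j hj
        by_contra h
        exact hex j hj (hsupp h)
      have hfx : f x = 0 := by
        rw [hfdef x]; exact Finset.sum_eq_zero this
      have : ∀ j ∈ Finset.range (d + 1), g (x - c j) = 0 := by
        intro j hj
        apply hg0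
        intro h
        exact hex j hj h
      rw [hfx, Finset.sum_eq_zero this]
      simp [Real.zero_rpow hp0]
  -- integral splits as a sum over any set
  have hsplit : ∀ A : Set ℝ, ∫⁻ x in A, ENNReal.ofReal (|f x| ^ p) =
      ∑ i ∈ Finset.range (d + 1), ∫⁻ x in A, g (x - c i) := by
    intro A
    simp_rw [hF]
    exact lintegral_finset_sum _ (fun i _ => hg_meas.comp (measurable_id.sub_const (c i)))
  -- zero on sets missing the support
  have hzero : ∀ (r : ℝ) (A : Set ℝ), MeasurableSet A → A ∩ Set.Ioo r (r + ε) = ∅ →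
      ∫⁻ x in A, g (x - r) = 0 := by
    intro r A hAm hA
    have hz : ∀ x ∈ A, g (x - r) = (0 : ℝ≥0∞) := by
      intro x hx
      apply hg0
      intro h
      simp only [Set.mem_Ioo] at h
      have : x ∈ A ∩ Set.Ioo r (r + ε) := ⟨hx, by constructor <;> linarith [h.1, h.2]⟩
      rw [hA] at this
      exact this
    rw [setLIntegral_congr_fun hAm hz]
    simp
  -- full integral on sets containing the (translated) support
  have hfull : ∀ (r : ℝ) (A : Set ℝ), Set.Ioo r (r + ε) ⊆ A →
      ∫⁻ x in A, g (x - r) = 1 := by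
    intro r A hA
    refine le_antisymm (hle1 r A) ?_
    have h1 : ∫⁻ x in Set.Ioo r (r + ε), g (x - r) = 1 := by
      rw [← lintegral_indicator measurableSet_Ioo]
      have hpt : ∀ x, (Set.Ioo r (r + ε)).indicator (fun x => g (x - r)) x
          = (Set.Ioo 0 ε).indicator g (x - r) := by
        intro x
        by_cases hx : x ∈ Set.Ioo r (r + ε)
        · have hx' : x - r ∈ Set.Ioo 0 ε := by
            simp only [Set.mem_Ioo] at hx ⊢; constructor <;> linarith [hx.1, hx.2]
          rw [Set.indicator_of_mem hx, Set.indicator_of_mem hx']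
        · have hx' : x - r ∉ Set.Ioo 0 ε := by
            simp only [Set.mem_Ioo] at hx ⊢
            intro h; exact hx ⟨by linarith [h.1], by linarith [h.2]⟩
          rw [Set.indicator_of_notMem hx, Set.indicator_of_notMem hx']
      simp_rw [hpt]
      rw [lintegral_sub_right_eq_self ((Set.Ioo 0 ε).indicator g) r]
      simp_rw [← hgind]
      exact hgint
    calc (1 : ℝ≥0∞) = ∫⁻ x in Set.Ioo r (r + ε), g (x - r) := h1.symm
    _ ≤ ∫⁻ x in A, g (x - r) := lintegral_mono_set hA
  -- Part A: norm over length-T windows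
  have hTnorm : intNormP p T f = ENNReal.ofReal (1 / T) := by
    apply le_antisymm
    · apply iSup_le
      intro a
      have hsum : ∫⁻ x in Set.Ioo a (a + T), ENNReal.ofReal (|f x| ^ p) ≤ 1 := by
        rw [hsplit]
        have hne : ∀ i : ℕ, (∫⁻ x in Set.Ioo a (a + T), g (x - c i)) ≠ 0 →
            (Set.Ioo a (a + T) ∩ Set.Ioo (c i) (c i + ε)).Nonempty := by
          intro i h
          rw [Set.nonempty_iff_ne_empty]
          intro hemp
          exact h (hzero (c i) _ measurableSet_Ioo hemp)
        by_cases hall : ∀ i ∈ Finset.range (d + 1),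
            (∫⁻ x in Set.Ioo a (a + T), g (x - c i)) = 0
        · rw [Finset.sum_eq_zero hall]; exact zero_le_one
        · push_neg at hall
          obtain ⟨i₀, hi₀mem, hi₀⟩ := hall
          obtain ⟨x, hxI, hxS⟩ := hne i₀ hi₀
          have : ∑ i ∈ Finset.range (d + 1), ∫⁻ x in Set.Ioo a (a + T), g (x - c i)
              = ∫⁻ x in Set.Ioo a (a + T), g (x - c i₀) := by
            refine Finset.sum_eq_single_of_mem i₀ hi₀mem ?_
            intro j _ hj
            by_contra hne'
            obtain ⟨y, hyI, hyS⟩ := hne j hne'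
            simp only [Set.mem_Ioo] at hxI hxS hyI hyS
            rcases Ne.lt_or_gt hj with h | h
            · have := hcsep j i₀ h
              linarith [hxS.1, hyS.2, hxI.2, hyI.1]
            · have := hcsep i₀ j h
              linarith [hxS.2, hyS.1, hxI.1, hyI.2]
          rw [this]
          exact hle1 _ _
      calc ENNReal.ofReal (1 / T) * ∫⁻ x in Set.Ioo a (a + T), ENNReal.ofReal (|f x| ^ p)
          ≤ ENNReal.ofReal (1 / T) * 1 := mul_le_mul_right hsum _
      _ = ENNReal.ofReal (1 / T) := mul_one _
    · set a₀ : ℝ := (ε - T) / 2 with ha₀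
      have hval : ∫⁻ x in Set.Ioo a₀ (a₀ + T), ENNReal.ofReal (|f x| ^ p) = 1 := by
        rw [hsplit]
        rw [Finset.sum_eq_single_of_mem 0 (Finset.mem_range.mpr (Nat.succ_pos d)) ?_]
        · have hc0 : c 0 = 0 := by simp [hc]
          rw [hc0]
          apply hfull
          intro x hx
          simp only [Set.mem_Ioo] at hx ⊢
          constructor
          · have : a₀ < 0 := by rw [ha₀]; linarith
            linarith [hx.1]
          · have : ε ≤ a₀ + T := by rw [ha₀]; linarith
            linarith [hx.2]
        · intro j _ hj
          apply hzero (c j) _ measurableSet_Ioo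
          rw [Set.eq_empty_iff_forall_notMem]
          intro x hx
          simp only [Set.mem_inter_iff, Set.mem_Ioo] at hx
          have hj1 : 0 < j := Nat.pos_of_ne_zero hj
          have := hcsep 0 j hj1
          have hc0 : c 0 = 0 := by simp [hc]
          rw [hc0] at this
          have h1 : x < a₀ + T := hx.1.2
          have h2 : c j < x := hx.2.1
          rw [ha₀] at h1
          linarith
      refine le_iSup_of_le a₀ ?_
      rw [hval, mul_one]
  -- Part B: norm over length-S windows
  have hcast : ENNReal.ofReal (1 / S) * ((d + 1 : ℕ) : ℝ≥0∞)
      = ENNReal.ofReal (((d : ℝ) + 1) / S) := by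
    rw [← ENNReal.ofReal_natCast (d + 1), ← ENNReal.ofReal_mul (by positivity)]
    congr 1
    push_cast
    field_simp
  have hSnorm : intNormP p S f = ENNReal.ofReal (((d : ℝ) + 1) / S) := by
    apply le_antisymm
    · apply iSup_le
      intro a
      have hsum : ∫⁻ x in Set.Ioo a (a + S), ENNReal.ofReal (|f x| ^ p)
          ≤ ((d + 1 : ℕ) : ℝ≥0∞) := by
        rw [hsplit]
        calc ∑ i ∈ Finset.range (d + 1), ∫⁻ x in Set.Ioo a (a + S), g (x - c i)
            ≤ ∑ _i ∈ Finset.range (d + 1), (1 : ℝ≥0∞) :=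
              Finset.sum_le_sum (fun i _ => hle1 _ _)
        _ = ((d + 1 : ℕ) : ℝ≥0∞) := by simp
      calc ENNReal.ofReal (1 / S) * ∫⁻ x in Set.Ioo a (a + S), ENNReal.ofReal (|f x| ^ p)
          ≤ ENNReal.ofReal (1 / S) * ((d + 1 : ℕ) : ℝ≥0∞) := mul_le_mul_right hsum _
      _ = ENNReal.ofReal (((d : ℝ) + 1) / S) := hcast
    · set δ : ℝ := S - (d : ℝ) * T - ((d : ℝ) + 1) * ε with hδ
      have hδpos : 0 < δ := by rw [hδ]; linarith
      set a₁ : ℝ := -(δ / 2) with ha₁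
      have hval : ∫⁻ x in Set.Ioo a₁ (a₁ + S), ENNReal.ofReal (|f x| ^ p)
          = ((d + 1 : ℕ) : ℝ≥0∞) := by
        rw [hsplit]
        have : ∀ i ∈ Finset.range (d + 1),
            ∫⁻ x in Set.Ioo a₁ (a₁ + S), g (x - c i) = 1 := by
          intro i hi
          apply hfull
          intro x hx
          simp only [Set.mem_Ioo] at hx ⊢
          have hid : (i : ℝ) ≤ (d : ℝ) := by
            exact_mod_cast Nat.lt_succ_iff.mp (Finset.mem_range.mp hi)
          have hci0 : 0 ≤ c i := by
            simp only [hc]; positivity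
          have hcid : c i + ε ≤ (d : ℝ) * T + ((d : ℝ) + 1) * ε := by
            simp only [hc]; nlinarith
          constructor
          · have : a₁ < 0 := by rw [ha₁]; linarith
            linarith [hx.1]
          · have : c i + ε ≤ a₁ + S := by
              rw [ha₁, hδ] at *
              linarith
            linarith [hx.2]
        rw [Finset.sum_congr rfl this]
        simp
      refine le_iSup_of_le a₁ ?_
      rw [hval, hcast]
  refine ⟨hTnorm, hSnorm, ?_⟩
  rw [div_lt_div_iff₀ hT hS]
  linarith
end
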